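/- Let α be an involutory automorphism of a Hamiltonian cycle system H of order 2n+1. Then α has exactly one fixed point. -/

import Mathlib

open Pointwise

variable {V : Type*}

/-- The action of a permutation on a simple graph by relabelling vertices. -/
instance permGraphAction : MulAction (Equiv.Perm V) (SimpleGraph V) where
  smul σ H := H.map σ.toEmbedding
  one_smul H := by
    show H.map (1 : Equiv.Perm V).toEmbedding = H
    ext a b
    simp [SimpleGraph.map_adj]
  mul_smul σ τ H := by
    ext a b
    show (H.map (σ * τ).toEmbedding).Adj a b ↔ ((H.map τ.toEmbedding).map σ.toEmbedding).Adj a b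
    simp only [SimpleGraph.map_adj]
    simp only [SimpleGraph.map_adj, Equiv.coe_toEmbedding, Equiv.Perm.coe_mul,
      Function.comp_apply]
    constructor
    · rintro ⟨u, v, h, rfl, rfl⟩
      exact ⟨τ u, τ v, ⟨u, v, h, rfl, rfl⟩, rfl, rfl⟩
    · rintro ⟨-, -, ⟨u, v, h, rfl, rfl⟩, rfl, rfl⟩
      exact ⟨u, v, h, rfl, rfl⟩

lemma perm_smul_graph (σ : Equiv.Perm V) (H : SimpleGraph V) :
    σ • H = H.map σ.toEmbedding := rfl

/-- A Hamiltonian cycle of the complete graph on `V`: a connected, 2-regular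
(spanning) subgraph. -/
def IsHamCycle [Fintype V] (H : SimpleGraph V) : Prop :=
  H.Connected ∧ ∀ v : V, (H.neighborSet v).ncard = 2

/-- A Hamiltonian cycle system: a set of Hamiltonian cycles whose edge sets
partition the edge set of the complete graph. -/
def IsHCS [Fintype V] (𝓗 : Set (SimpleGraph V)) : Prop :=
  (∀ H ∈ 𝓗, IsHamCycle H) ∧
    ∀ e ∈ (⊤ : SimpleGraph V).edgeSet, ∃! H, H ∈ 𝓗 ∧ e ∈ H.edgeSet

/-- The full automorphism group of a Hamiltonian cycle system, as the subgroup
of vertex permutations preserving the set of cycles. -/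
def autHCS (𝓗 : Set (SimpleGraph V)) : Subgroup (Equiv.Perm V) :=
  MulAction.stabilizer (Equiv.Perm V) 𝓗

/-- The cycle graph traced by a map from `ZMod m` (consecutive residues are adjacent). -/
def cycleOn {W : Type*} (m : ℕ) (f : ZMod m → W) : SimpleGraph W :=
  SimpleGraph.fromRel (fun a b => ∃ i : ZMod m, f i = a ∧ f (i + 1) = b)

/-- an involutory automorphism of an HCS of order `2n+1` has exactly one
fixed point. -/
theorem involution_unique_fixed_point [Fintype V] (n : ℕ) (hV : Fintype.card V = 2 * n + 1)
    (𝓗 : Set (SimpleGraph V)) (h : IsHCS 𝓗) (σ : Equiv.Perm V)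
    (hmem : σ ∈ autHCS 𝓗) (hord : orderOf σ = 2) :
    ∃! x : V, σ x = x := by
  -- `σ` squares to the identity
  have hσ2 : σ ^ 2 = 1 := by rw [← hord]; exact pow_orderOf_eq_one σ
  have hσinv : ∀ v : V, σ (σ v) = v := by
    intro v
    have := congrArg (fun τ : Equiv.Perm V => τ v) hσ2
    simpa [pow_succ, Equiv.Perm.mul_apply] using this
  -- existence of a fixed point by a parity argument
  haveI : Fact (Nat.Prime 2) := ⟨Nat.prime_two⟩
  have hcard : ¬ (2 ∣ Fintype.card V) := by omega
  obtain ⟨x, hx⟩ := Equiv.Perm.exists_fixed_point_of_prime (p := 2) (n := 1) hcard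
    (by simpa using hσ2)
  refine ⟨x, hx, fun y hy => ?_⟩
  by_contra hxy
  -- the edge {y, x} lies in a unique cycle H of the system
  have hadjtop : (⊤ : SimpleGraph V).Adj y x := by simp [hxy]
  obtain ⟨H, ⟨hH𝓗, hHe⟩, huniq⟩ := h.2 (s(y, x)) (by simpa using hadjtop)
  -- σ stabilizes H
  have hstab : σ • 𝓗 = 𝓗 := hmem
  have hσH : σ • H = H := by
    refine (huniq (σ • H) ⟨?_, ?_⟩)
    · rw [← hstab]; exact Set.smul_mem_smul_set hH𝓗
    · rw [SimpleGraph.mem_edgeSet] at hHe ⊢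
      rw [perm_smul_graph]
      exact ⟨hxy, y, x, hHe, hy, hx⟩
  -- σ preserves adjacency in H
  have hpres : ∀ u v : V, H.Adj u v → H.Adj (σ u) (σ v) := by
    intro u v huv
    have : (σ • H).Adj (σ u) (σ v) := by
      rw [perm_smul_graph]; exact ⟨σ.injective.ne huv.ne, u, v, huv, rfl, rfl⟩
    rwa [hσH] at this
  have hxyadj : H.Adj y x := by rwa [SimpleGraph.mem_edgeSet] at hHe
  obtain ⟨hconn, hreg⟩ := h.1 H hH𝓗
  -- key: if σ fixes u and a neighbor v of u, then σ fixes every neighbor of u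
  have key : ∀ u v : V, σ u = u → σ v = v → H.Adj u v →
      ∀ w : V, H.Adj u w → σ w = w := by
    intro u v hu hv huv w huw
    by_cases hwv : w = v
    · rw [hwv]; exact hv
    have hσw : σ w ∈ H.neighborSet u := by
      have := hpres u w huw
      rwa [hu] at this
    have hsub : ({v, w} : Set V) ⊆ H.neighborSet u := by
      rintro z (rfl | rfl)
      · exact huv
      · exact huw
    have hcard2 : ({v, w} : Set V).ncard = 2 := by
      rw [Set.ncard_pair (Ne.symm hwv)]
    have heq : ({v, w} : Set V) = H.neighborSet u := by
      apply Set.eq_of_subset_of_ncard_le hsub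
      rw [hcard2, hreg u]
    rw [← heq] at hσw
    rcases hσw with hσw | hσw
    · exfalso
      apply hwv
      have : σ w = σ v := by rw [hσw, hv]
      exact σ.injective this
    · exact hσw
  -- propagate fixedness along walks
  have walkfix : ∀ (a b : V) (p : H.Walk a b), σ a = a →
      (∀ w : V, H.Adj a w → σ w = w) → σ b = b := by
    intro a b p
    induction p with
    | nil => intro ha _; exact ha
    | cons hadj q ih =>
      rename_i a c b
      intro ha hnb
      have hc : σ c = c := hnb c hadj
      exact ih hc (key c a hc ha hadj.symm)
  -- all neighbors of y are fixed
  have hnbfix : ∀ w : V, H.Adj y w → σ w = w :=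
    key y x hy hx hxyadj
  -- hence every vertex is fixed, so σ = 1, contradicting orderOf σ = 2
  have hall : ∀ b : V, σ b = b := by
    intro b
    obtain ⟨p⟩ := hconn y b
    exact walkfix y b p hy hnbfix
  have : σ = 1 := Equiv.ext fun v => hall v
  rw [this, orderOf_one] at hord
  exact absurd hord (by norm_num)
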